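/- Let f⁽¹⁾, f⁽²⁾ ∈ ℝ₊ᴺ with ∑ᵢ fᵢ⁽¹⁾ Δvᵢ = ∑ᵢ fᵢ⁽²⁾ Δvᵢ, and suppose fᵢ⁽¹⁾ ≥ C₀ > 0 and fᵢ⁽²⁾ ≥ C₀ for all i, with C₀ ≤ 1. Then |η(f⁽¹⁾) − η(f⁽²⁾)| ≤ max(2, 2|log C₀|) · ‖f⁽¹⁾ − f⁽²⁾‖₂ · (‖f⁽¹⁾ − 1‖₂ + ‖f⁽²⁾ − 1‖₂). -/

import Mathlib

open Real Finset

private lemma log_abs_bound {C₀ t : ℝ} (hC₀ : 0 < C₀) (hC₀' : C₀ ≤ 1) (ht : C₀ ≤ t) :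
    |Real.log t| ≤ max 2 (2 * |Real.log C₀|) * |t - 1| := by
  have ht0 : 0 < t := lt_of_lt_of_le hC₀ ht
  have hM2 : (2:ℝ) ≤ max 2 (2 * |Real.log C₀|) := le_max_left _ _
  have hM2' : 2 * |Real.log C₀| ≤ max 2 (2 * |Real.log C₀|) := le_max_right _ _
  rcases le_or_gt 1 t with h1 | h1
  · rw [abs_of_nonneg (Real.log_nonneg h1),
      abs_of_nonneg (show (0:ℝ) ≤ t - 1 by linarith)]
    have := Real.log_le_sub_one_of_pos ht0
    nlinarith
  · rw [abs_of_nonpos (Real.log_nonpos ht0.le h1.le),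
      abs_of_nonpos (show t - 1 ≤ (0:ℝ) by linarith)]
    rcases le_or_gt (1/2 : ℝ) t with h2 | h2
    · have hinv : Real.log t⁻¹ ≤ t⁻¹ - 1 := Real.log_le_sub_one_of_pos (by positivity)
      rw [Real.log_inv] at hinv
      have ht1 : t⁻¹ ≤ 2 := by
        rw [inv_le_comm₀ ht0 (by norm_num)]; linarith
      have key : -Real.log t ≤ 2 * (1 - t) := by
        have heq : t⁻¹ - 1 = t⁻¹ * (1 - t) := by field_simp
        nlinarith [inv_nonneg.mpr ht0.le]
      nlinarith [mul_le_mul_of_nonneg_right hM2 (show (0:ℝ) ≤ 1 - t by linarith)]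
    · have hlogC : -Real.log C₀ = |Real.log C₀| :=
        (abs_of_nonpos (Real.log_nonpos hC₀.le hC₀')).symm
      have hmono : -Real.log t ≤ -Real.log C₀ := by
        have := Real.log_le_log hC₀ ht; linarith
      have hh1 := mul_le_mul_of_nonneg_right hM2' (show (0:ℝ) ≤ 1 - t by linarith)
      have hh2 := mul_nonneg (abs_nonneg (Real.log C₀))
        (show (0:ℝ) ≤ 2 * (1 - t) - 1 by linarith)
      nlinarith

private lemma pointwise_bound {C₀ a b : ℝ} (hC₀ : 0 < C₀) (hC₀' : C₀ ≤ 1)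
    (ha : C₀ ≤ a) (hb : C₀ ≤ b) :
    |a * Real.log a - b * Real.log b - (a - b)| ≤
      max 2 (2 * |Real.log C₀|) * (|a - b| * (|a - 1| + |b - 1|)) := by
  -- wlog b ≤ a
  wlog hab : b ≤ a generalizing a b
  · have := this hb ha (le_of_not_ge hab)
    rw [show a * Real.log a - b * Real.log b - (a - b)
        = -(b * Real.log b - a * Real.log a - (b - a)) by ring, abs_neg]
    rw [abs_sub_comm a b]
    linarith [this]
  rcases eq_or_lt_of_le hab with heq | hlt
  · subst heq; simp
  · -- MVT for g t = t log t - t on [b, a]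
    set g : ℝ → ℝ := fun t => t * Real.log t - t with hg
    have hcont : ContinuousOn g (Set.Icc b a) :=
      (Real.continuous_mul_log.sub continuous_id).continuousOn
    have hderiv : ∀ x ∈ Set.Ioo b a, HasDerivAt g (Real.log x) x := by
      intro x hx
      have hx0 : x ≠ 0 := by
        have : C₀ < x := lt_of_le_of_lt hb hx.1
        linarith
      have := (Real.hasDerivAt_mul_log hx0).sub (hasDerivAt_id x)
      rw [show Real.log x + 1 - 1 = Real.log x by ring] at this
      exact this
    obtain ⟨ξ, hξ, hξ'⟩ := exists_hasDerivAt_eq_slope g Real.log hlt hcont hderiv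
    have hξC : C₀ ≤ ξ := le_trans hb hξ.1.le
    have hslope : g a - g b = (a - b) * Real.log ξ := by
      rw [hξ']; field_simp [sub_ne_zero.mpr hlt.ne']
    have hgab : a * Real.log a - b * Real.log b - (a - b) = (a - b) * Real.log ξ := by
      rw [← hslope]; simp [hg]; ring
    rw [hgab, abs_mul]
    have hξ1 : |ξ - 1| ≤ |a - 1| + |b - 1| := by
      rcases le_or_gt 1 ξ with h | h
      · rw [abs_of_nonneg (by linarith)]
        have : ξ - 1 ≤ a - 1 := by linarith [hξ.2.le]
        calc ξ - 1 ≤ |a - 1| := le_trans this (le_abs_self _)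
          _ ≤ |a - 1| + |b - 1| := by linarith [abs_nonneg (b - 1)]
      · rw [abs_of_nonpos (by linarith)]
        have : 1 - ξ ≤ 1 - b := by linarith [hξ.1.le]
        calc -(ξ - 1) = 1 - ξ := by ring
          _ ≤ |b - 1| := le_trans this (by rw [abs_sub_comm]; exact le_abs_self _)
          _ ≤ |a - 1| + |b - 1| := by linarith [abs_nonneg (a - 1)]
    have hlog := log_abs_bound hC₀ hC₀' hξC
    have hM : (0:ℝ) ≤ max 2 (2 * |Real.log C₀|) := le_trans (by norm_num) (le_max_left _ _)
    calc |a - b| * |Real.log ξ| ≤ |a - b| * (max 2 (2 * |Real.log C₀|) * |ξ - 1|) := by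
          apply mul_le_mul_of_nonneg_left hlog (abs_nonneg _)
      _ ≤ |a - b| * (max 2 (2 * |Real.log C₀|) * (|a - 1| + |b - 1|)) := by
          apply mul_le_mul_of_nonneg_left _ (abs_nonneg _)
          exact mul_le_mul_of_nonneg_left hξ1 hM
      _ = max 2 (2 * |Real.log C₀|) * (|a - b| * (|a - 1| + |b - 1|)) := by ring

private lemma weighted_cs (N : ℕ) (u w Δv : Fin N → ℝ) (hΔv : ∀ i, 0 ≤ Δv i) :
    ∑ i, |u i| * |w i| * Δv i ≤
      Real.sqrt (∑ i, u i ^ 2 * Δv i) * Real.sqrt (∑ i, w i ^ 2 * Δv i) := by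
  have h := sum_mul_sq_le_sq_mul_sq Finset.univ
    (fun i => |u i| * Real.sqrt (Δv i)) (fun i => |w i| * Real.sqrt (Δv i))
  have h1 : ∀ i, (|u i| * Real.sqrt (Δv i)) * (|w i| * Real.sqrt (Δv i))
      = |u i| * |w i| * Δv i := by
    intro i
    rw [show (|u i| * Real.sqrt (Δv i)) * (|w i| * Real.sqrt (Δv i))
        = |u i| * |w i| * (Real.sqrt (Δv i) * Real.sqrt (Δv i)) by ring,
      Real.mul_self_sqrt (hΔv i)]
  have h2 : ∀ i, (|u i| * Real.sqrt (Δv i)) ^ 2 = u i ^ 2 * Δv i := by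
    intro i
    rw [mul_pow, Real.sq_sqrt (hΔv i), sq_abs]
  have h3 : ∀ i, (|w i| * Real.sqrt (Δv i)) ^ 2 = w i ^ 2 * Δv i := by
    intro i
    rw [mul_pow, Real.sq_sqrt (hΔv i), sq_abs]
  simp only [h1, h2, h3] at h
  have hnn : (0:ℝ) ≤ ∑ i, |u i| * |w i| * Δv i := by
    apply Finset.sum_nonneg
    intro i _
    have := hΔv i; positivity
  calc ∑ i, |u i| * |w i| * Δv i
      = Real.sqrt ((∑ i, |u i| * |w i| * Δv i) ^ 2) := by rw [Real.sqrt_sq hnn]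
    _ ≤ Real.sqrt ((∑ i, u i ^ 2 * Δv i) * ∑ i, w i ^ 2 * Δv i) := Real.sqrt_le_sqrt h
    _ = _ := Real.sqrt_mul (Finset.sum_nonneg fun i _ => by
        have := hΔv i; positivity) _

/-- Estimate on the entropy difference for two vectors bounded below by `C₀`. -/
theorem entropy_diff_estimate
    (N : ℕ) (Δv f1 f2 : Fin N → ℝ) (C₀ : ℝ)
    (hΔv : ∀ i, 0 < Δv i) (hC₀ : 0 < C₀) (hC₀' : C₀ ≤ 1)
    (hf1 : ∀ i, C₀ ≤ f1 i) (hf2 : ∀ i, C₀ ≤ f2 i)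
    (hmass : (∑ i, f1 i * Δv i) = ∑ i, f2 i * Δv i) :
    |(∑ i, f1 i * Real.log (f1 i) * Δv i) - ∑ i, f2 i * Real.log (f2 i) * Δv i| ≤
      max 2 (2 * |Real.log C₀|) *
        Real.sqrt (∑ i, (f1 i - f2 i) ^ 2 * Δv i) *
        (Real.sqrt (∑ i, (f1 i - 1) ^ 2 * Δv i) +
          Real.sqrt (∑ i, (f2 i - 1) ^ 2 * Δv i)) := by
  set M := max 2 (2 * |Real.log C₀|) with hM
  have hM0 : (0:ℝ) ≤ M := le_trans (by norm_num) (le_max_left _ _)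
  have key : (∑ i, f1 i * Real.log (f1 i) * Δv i) - ∑ i, f2 i * Real.log (f2 i) * Δv i
      = ∑ i, (f1 i * Real.log (f1 i) - f2 i * Real.log (f2 i) - (f1 i - f2 i)) * Δv i := by
    have : ∑ i, (f1 i - f2 i) * Δv i = 0 := by
      simp only [sub_mul, Finset.sum_sub_distrib]
      rw [hmass]; ring
    rw [← Finset.sum_sub_distrib]
    have expand : ∀ i : Fin N,
        (f1 i * Real.log (f1 i) - f2 i * Real.log (f2 i) - (f1 i - f2 i)) * Δv i
        = (f1 i * Real.log (f1 i) * Δv i - f2 i * Real.log (f2 i) * Δv i)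
          - (f1 i - f2 i) * Δv i := by intro i; ring
    simp only [expand, Finset.sum_sub_distrib]
    rw [this]; ring
  rw [key]
  calc |∑ i, (f1 i * Real.log (f1 i) - f2 i * Real.log (f2 i) - (f1 i - f2 i)) * Δv i|
      ≤ ∑ i, |(f1 i * Real.log (f1 i) - f2 i * Real.log (f2 i) - (f1 i - f2 i)) * Δv i| :=
        Finset.abs_sum_le_sum_abs _ _
    _ ≤ ∑ i, M * (|f1 i - f2 i| * (|f1 i - 1| + |f2 i - 1|)) * Δv i := by
        apply Finset.sum_le_sum
        intro i _
        rw [abs_mul, abs_of_pos (hΔv i)]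
        exact mul_le_mul_of_nonneg_right
          (pointwise_bound hC₀ hC₀' (hf1 i) (hf2 i)) (hΔv i).le
    _ = M * ((∑ i, |f1 i - f2 i| * |f1 i - 1| * Δv i)
          + ∑ i, |f1 i - f2 i| * |f2 i - 1| * Δv i) := by
        rw [← Finset.sum_add_distrib, Finset.mul_sum]
        apply Finset.sum_congr rfl
        intro i _; ring
    _ ≤ M * (Real.sqrt (∑ i, (f1 i - f2 i) ^ 2 * Δv i) * Real.sqrt (∑ i, (f1 i - 1) ^ 2 * Δv i)
          + Real.sqrt (∑ i, (f1 i - f2 i) ^ 2 * Δv i) * Real.sqrt (∑ i, (f2 i - 1) ^ 2 * Δv i)) := by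
        apply mul_le_mul_of_nonneg_left _ hM0
        exact add_le_add
          (weighted_cs N (fun i => f1 i - f2 i) (fun i => f1 i - 1) Δv fun i => (hΔv i).le)
          (weighted_cs N (fun i => f1 i - f2 i) (fun i => f2 i - 1) Δv fun i => (hΔv i).le)
    _ = M * Real.sqrt (∑ i, (f1 i - f2 i) ^ 2 * Δv i) *
        (Real.sqrt (∑ i, (f1 i - 1) ^ 2 * Δv i) + Real.sqrt (∑ i, (f2 i - 1) ^ 2 * Δv i)) := by
        ring
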